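/- For all ν with ν⁴−6ν²−3 ≠ 0 and (ν−1)(ν+1)(ν²+1) ≠ 0, the identity φ₆(u(ν)) = -(ν⁴−3−6ν²)³/((ν−1)⁴(1+ν)⁴(1+ν²)) holds, where φ₆(u) = 32/((1+2u)(2u−1)²) and u(ν) = -(ν⁴+2ν²+5)/(2(ν⁴−6ν²−3)). -/

import Mathlib

/-- φ₆(u(ν)) = -(ν⁴-3-6ν²)³/((ν-1)⁴(1+ν)⁴(1+ν²)). -/
theorem stmt8 (ν : ℚ) (h : ν ^ 4 - 6 * ν ^ 2 - 3 ≠ 0)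
    (h' : (ν - 1) * (ν + 1) * (ν ^ 2 + 1) ≠ 0) :
    letI u : ℚ := -(ν ^ 4 + 2 * ν ^ 2 + 5) / (2 * (ν ^ 4 - 6 * ν ^ 2 - 3))
    32 / ((1 + 2 * u) * (2 * u - 1) ^ 2) =
      -(ν ^ 4 - 3 - 6 * ν ^ 2) ^ 3
        / ((ν - 1) ^ 4 * (1 + ν) ^ 4 * (1 + ν ^ 2)) := by
  have h1 : ν - 1 ≠ 0 := fun e => h' (by rw [e]; ring)
  have h2 : ν + 1 ≠ 0 := fun e => h' (by rw [e]; ring)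
  have h3 : ν ^ 2 + 1 ≠ 0 := fun e => h' (by rw [e]; ring)
  set u : ℚ := -(ν ^ 4 + 2 * ν ^ 2 + 5) / (2 * (ν ^ 4 - 6 * ν ^ 2 - 3)) with hu
  have hc : (1 + 2 * u) * (2 * u - 1) ^ 2 =
      (-32 * (ν ^ 2 + 1) * ((ν - 1) * (ν + 1)) ^ 4) / (ν ^ 4 - 6 * ν ^ 2 - 3) ^ 3 := by
    rw [hu]
    generalize hd : ν ^ 4 - 6 * ν ^ 2 - 3 = d at h ⊢
    field_simp
    subst hd
    ring
  rw [hc, div_div_eq_mul_div]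
  have hN : (-32 : ℚ) * (ν ^ 2 + 1) * ((ν - 1) * (ν + 1)) ^ 4 ≠ 0 := by
    apply mul_ne_zero (mul_ne_zero (by norm_num) h3) (pow_ne_zero _ (mul_ne_zero h1 h2))
  have hD : (ν - 1) ^ 4 * (1 + ν) ^ 4 * (1 + ν ^ 2) ≠ 0 := by
    apply mul_ne_zero (mul_ne_zero (pow_ne_zero _ h1) (pow_ne_zero _ (by rw [add_comm]; exact h2)))
    rw [add_comm]; exact h3
  rw [div_eq_div_iff hN hD]
  ring
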